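/- arXiv:1007.4455 — 2 statements merged into one kernel-verified Lean document; each statement's English description precedes it below -/
import Mathlib

section
/- Let A generate an α-times resolvent family {S_α(t)}_{t≥0} on X, where 1 < α < 2, and let P_α(t)x = ∫_0^t g_{α−1}(t−s)S_α(s)x ds. Then for every x ∈ X and all 0 ≤ a ≤ b ≤ t, the element ∫_a^b s P_α(t−s)x ds belongs to D(A) and A(∫_a^b s P_α(t−s)x ds) = a S_α(t−a)x − b S_α(t−b)x + ∫_a^b S_α(t−s)x ds. -/
open MeasureTheory Set

/-- `g β t = t^(β-1)/Γ(β)`. -/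
noncomputable def g (β t : ℝ) : ℝ := t ^ (β - 1) / Real.Gamma β

/-- `Pa α S t x = (g_{α-1} * S)(t) x = ∫_0^t g_{α-1}(t-s) S(s) x ds`. -/
noncomputable def Pa {X : Type*} [NormedAddCommGroup X] [NormedSpace ℂ X]
    (α : ℝ) (S : ℝ → X →L[ℂ] X) (t : ℝ) (x : X) : X :=
  ∫ s in (0:ℝ)..t, g (α - 1) (t - s) • S s x

namespace Stmt2Aux

open intervalIntegral
open scoped Interval

lemma g_nonneg {β s : ℝ} (hβ : 0 < β) (hs : 0 ≤ s) : 0 ≤ g β s :=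
  div_nonneg (Real.rpow_nonneg hs _) (Real.Gamma_pos_of_pos hβ).le

lemma g_measurable (β : ℝ) : Measurable (g β) := by
  unfold g; fun_prop

lemma g_mono {α : ℝ} (hα1 : 1 < α) {σ τ : ℝ} (h0 : 0 ≤ σ) (h : σ ≤ τ) : g α σ ≤ g α τ := by
  unfold g
  have hΓ : 0 < Real.Gamma α := Real.Gamma_pos_of_pos (by linarith)
  exact (div_le_div_iff_of_pos_right hΓ).2 (Real.rpow_le_rpow h0 h (by linarith))

lemma gker_int_id {β : ℝ} (hβ : 0 < β) (a b : ℝ) :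
    IntervalIntegrable (fun s => g β s) volume a b := by
  have h1 : IntervalIntegrable (fun x : ℝ => x ^ (β - 1)) volume a b :=
    intervalIntegrable_rpow' (by linarith)
  simpa [g, div_eq_mul_inv] using h1.mul_const (Real.Gamma β)⁻¹

lemma gker_int_left {β : ℝ} (hβ : 0 < β) (c a b : ℝ) :
    IntervalIntegrable (fun s => g β (c - s)) volume a b := by
  have h1 : IntervalIntegrable (fun s => g β s) volume (c - b) (c - a) := gker_int_id hβ _ _
  have h2 := h1.comp_sub_left c
  simpa using h2.symm

lemma gker_int_right {β : ℝ} (hβ : 0 < β) (d a b : ℝ) :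
    IntervalIntegrable (fun s => g β (s - d)) volume a b := by
  have h1 : IntervalIntegrable (fun s => g β s) volume (a - d) (b - d) := gker_int_id hβ _ _
  have h2 := h1.comp_sub_right d
  simpa using h2

/-- An interval-integrable real function times a function continuous on the interval. -/
lemma II.smul_cont {E : Type*} [NormedAddCommGroup E] [NormedSpace ℝ E]
    {f : ℝ → ℝ} {φ : ℝ → E} {a b : ℝ}
    (hf : IntervalIntegrable f volume a b) (hφ : ContinuousOn φ (uIcc a b)) :
    IntervalIntegrable (fun s => f s • φ s) volume a b := by
  obtain ⟨C, hC⟩ := (isCompact_uIcc).exists_bound_of_continuousOn hφ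
  rw [intervalIntegrable_iff] at hf ⊢
  have hmeas : AEStronglyMeasurable (fun s => f s • φ s) (volume.restrict (Ι a b)) :=
    hf.aestronglyMeasurable.smul
      ((hφ.mono uIoc_subset_uIcc).aestronglyMeasurable measurableSet_uIoc)
  apply Integrable.mono' (hf.norm.mul_const C) hmeas
  filter_upwards [ae_restrict_mem measurableSet_uIoc] with s hs
  rw [norm_smul]
  have h1 : ‖φ s‖ ≤ C := hC s (uIoc_subset_uIcc hs)
  exact mul_le_mul_of_nonneg_left h1 (norm_nonneg _)

lemma II.congr {E : Type*} [NormedAddCommGroup E] {f h : ℝ → E} {a b : ℝ}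
    (hf : IntervalIntegrable f volume a b) (he : ∀ x ∈ Ι a b, f x = h x) :
    IntervalIntegrable h volume a b := by
  rw [intervalIntegrable_iff] at hf ⊢
  exact hf.congr ((ae_restrict_mem measurableSet_uIoc).mono fun x hx => (he x hx))

lemma gint {α : ℝ} (hα1 : 1 < α) (hα2 : α < 2) {u τ : ℝ} (h : u ≤ τ) :
    (∫ σ in u..τ, g (α - 1) (σ - u)) = g α (τ - u) := by
  have h0 : (0:ℝ) ≤ τ - u := by linarith
  have e1 : (∫ σ in u..τ, g (α - 1) (σ - u)) = ∫ σ in (0:ℝ)..(τ - u), g (α - 1) σ := by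
    have := integral_comp_sub_right (a := u) (b := τ) (fun σ => g (α - 1) σ) u
    simpa using this
  rw [e1]
  unfold g
  rw [intervalIntegral.integral_div]
  rw [integral_rpow (Or.inl (by linarith : (-1:ℝ) < α - 1 - 1))]
  have he : α - 1 - 1 + 1 = α - 1 := by ring
  rw [he, Real.zero_rpow (by linarith : α - 1 ≠ 0)]
  have hΓ : Real.Gamma α = (α - 1) * Real.Gamma (α - 1) := by
    have := Real.Gamma_add_one (s := α - 1) (by linarith)
    rw [sub_add_cancel] at this
    exact this
  have hΓ1 : Real.Gamma (α - 1) ≠ 0 := (Real.Gamma_pos_of_pos (by linarith)).ne'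
  rw [hΓ]
  rw [sub_zero]
  field_simp

lemma gint0 {α : ℝ} (hα1 : 1 < α) (hα2 : α < 2) {τ : ℝ} (hτ : 0 ≤ τ) :
    (∫ u in (0:ℝ)..τ, g (α - 1) (τ - u)) = g α τ := by
  have h := integral_comp_sub_left (a := (0:ℝ)) (b := τ) (g (α - 1)) τ
  simp only [sub_zero, sub_self] at h
  rw [h]
  have h2 := gint hα1 hα2 (u := 0) (τ := τ) hτ
  simpa using h2

lemma smul_mem_real {E : Type*} [NormedAddCommGroup E] [NormedSpace ℂ E]
    (p : Submodule ℂ E) (r : ℝ) {w : E} (hw : w ∈ p) : r • w ∈ p := by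
  rw [← algebraMap_smul ℂ r w]; exact p.smul_mem _ hw

lemma integral_mem_closed_submodule {E : Type*} [NormedAddCommGroup E] [NormedSpace ℂ E]
    [CompleteSpace E] (p : Submodule ℂ E) (hp : IsClosed (p : Set E)) {f : ℝ → E} {a b : ℝ}
    (hab : a ≤ b) (hfi : IntervalIntegrable f volume a b)
    (hmem : ∀ s ∈ Set.Ioc a b, f s ∈ p) :
    (∫ s in a..b, f s) ∈ p := by
  rcases eq_or_lt_of_le hab with rfl | hlt
  · rw [intervalIntegral.integral_same]; exact p.zero_mem
  · rw [intervalIntegral.integral_of_le hab]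
    have hconv : Convex ℝ (p : Set E) := by
      intro u hu v hv s r _ _ _
      exact p.add_mem (smul_mem_real p s hu) (smul_mem_real p r hv)
    have hne : volume (Set.Ioc a b) ≠ 0 := by
      simp only [Real.volume_Ioc]
      simp [ENNReal.ofReal_eq_zero]
      linarith
    have hfin : volume (Set.Ioc a b) ≠ ⊤ := by simp [Real.volume_Ioc]
    have hfi' : IntegrableOn f (Set.Ioc a b) volume := hfi.1
    have hmem' : ∀ᵐ s ∂(volume.restrict (Set.Ioc a b)), f s ∈ (p : Set E) :=
      (ae_restrict_mem measurableSet_Ioc).mono (fun s hs => hmem s hs)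
    have havg := hconv.set_average_mem hp hne hfin hmem' hfi'
    have htr : (volume (Set.Ioc a b)).toReal ≠ 0 := by
      simp [Real.volume_Ioc, ENNReal.toReal_ofReal (by linarith : (0:ℝ) ≤ b - a)]
      linarith
    have heq : ∫ s in Set.Ioc a b, f s
        = (volume (Set.Ioc a b)).toReal • ⨍ s in Set.Ioc a b, f s := by
      rw [MeasureTheory.setAverage_eq, smul_smul, measureReal_def, mul_inv_cancel₀ htr, one_smul]
    rw [heq]
    exact smul_mem_real p _ havg

lemma integral_pair2 {X : Type*} [NormedAddCommGroup X] [NormedSpace ℂ X] [CompleteSpace X]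
    {f h : ℝ → X} {a b : ℝ} (hf : IntervalIntegrable f volume a b)
    (hh : IntervalIntegrable h volume a b) :
    (∫ s in a..b, (f s, h s)) = ((∫ s in a..b, f s), ∫ s in a..b, h s) := by
  have hfh : IntervalIntegrable (fun s => (f s, h s)) volume a b :=
    ⟨hf.1.prodMk hh.1, hf.2.prodMk hh.2⟩
  have h1 := (ContinuousLinearMap.fst ℂ X X).intervalIntegral_comp_comm hfh
  have h2 := (ContinuousLinearMap.snd ℂ X X).intervalIntegral_comp_comm hfh
  exact Prod.ext (by simpa using h1.symm) (by simpa using h2.symm)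

lemma pair_integral_mem {X : Type*} [NormedAddCommGroup X] [NormedSpace ℂ X] [CompleteSpace X]
    (p : Submodule ℂ (X × X)) (hp : IsClosed (p : Set (X × X))) {f h : ℝ → X} {a b : ℝ}
    (hab : a ≤ b) (hf : IntervalIntegrable f volume a b) (hh : IntervalIntegrable h volume a b)
    (hmem : ∀ s ∈ Set.Ioc a b, (f s, h s) ∈ p) :
    ((∫ s in a..b, f s), ∫ s in a..b, h s) ∈ p := by
  rw [← integral_pair2 hf hh]
  exact integral_mem_closed_submodule p hp hab ⟨hf.1.prodMk hh.1, hf.2.prodMk hh.2⟩ hmem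

lemma Qcont {X : Type*} [NormedAddCommGroup X] [NormedSpace ℂ X] [CompleteSpace X]
    {α : ℝ} (hα1 : 1 < α) (hα2 : α < 2)
    {V : ℝ → X} (hV : Continuous V) {M : ℝ} (hM : ∀ σ, ‖V σ‖ ≤ M) :
    ContinuousOn (fun τ => ∫ u in (0:ℝ)..τ, g (α - 1) (τ - u) • V u) (Ici (0:ℝ)) := by
  have hβ : (0:ℝ) < α - 1 := by linarith
  intro τ0 hτ0
  simp only [mem_Ici] at hτ0
  set T : ℝ := τ0 + 1 with hT
  have hτ0T : τ0 < T := by simp [hT]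
  have hTpos : 0 < T := by linarith
  set F : ℝ → ℝ → X := fun τ u => (Iic τ).indicator (fun v => g (α - 1) v • V (τ - v)) u with hF
  have key : ∀ τ ∈ Icc (0:ℝ) T,
      (∫ u in (0:ℝ)..τ, g (α - 1) (τ - u) • V u) = ∫ u in (0:ℝ)..T, F τ u := by
    rintro τ ⟨h0, hτT⟩
    have sub1 : (∫ u in (0:ℝ)..τ, g (α - 1) (τ - u) • V u)
        = ∫ u in (0:ℝ)..τ, g (α - 1) u • V (τ - u) := by
      have h := integral_comp_sub_left (a := (0:ℝ)) (b := τ)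
        (fun v => g (α - 1) v • V (τ - v)) τ
      simp only [sub_zero, sub_self] at h
      rw [← h]
      apply intervalIntegral.integral_congr
      intro u _
      simp [sub_sub_cancel]
    have hint1 : IntervalIntegrable (F τ) volume 0 τ := by
      apply II.congr (f := fun u => g (α - 1) u • V (τ - u))
      · exact II.smul_cont (gker_int_id hβ 0 τ)
          ((hV.comp (continuous_const.sub continuous_id)).continuousOn)
      · intro u hu
        rw [uIoc_of_le h0] at hu
        rw [hF]
        simp only []
        rw [Set.indicator_of_mem (Set.mem_Iic.2 hu.2)]
    have hint2 : IntervalIntegrable (F τ) volume τ T := by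
      apply II.congr (f := fun _ => (0:X)) (intervalIntegrable_const)
      intro u hu
      rw [uIoc_of_le hτT] at hu
      rw [hF]
      simp only []
      rw [Set.indicator_of_notMem (by simp [Set.mem_Iic]; exact hu.1)]
    have split := intervalIntegral.integral_add_adjacent_intervals hint1 hint2
    have e2 : (∫ u in τ..T, F τ u) = 0 := by
      rw [intervalIntegral.integral_congr_ae (g := fun _ => (0:X)) ?_,
        intervalIntegral.integral_const, smul_zero]
      apply Filter.Eventually.of_forall
      intro u hu
      rw [uIoc_of_le hτT] at hu
      rw [hF]
      simp only []
      rw [Set.indicator_of_notMem (by simp [Set.mem_Iic]; exact hu.1)]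
    have e1 : (∫ u in (0:ℝ)..τ, F τ u) = ∫ u in (0:ℝ)..τ, g (α - 1) u • V (τ - u) := by
      apply intervalIntegral.integral_congr
      intro u hu
      rw [uIcc_of_le h0] at hu
      rw [hF]
      simp only []
      rw [Set.indicator_of_mem (Set.mem_Iic.2 hu.2)]
    rw [sub1, ← split, e1, e2, add_zero]
  have hM0 : 0 ≤ M := le_trans (norm_nonneg _) (hM 0)
  have cw : ContinuousWithinAt (fun τ => ∫ u in (0:ℝ)..T, F τ u) (Ici 0) τ0 := by
    apply intervalIntegral.continuousWithinAt_of_dominated_interval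
      (bound := fun u => g (α - 1) u * M)
    · apply Filter.Eventually.of_forall
      intro τ
      apply AEStronglyMeasurable.indicator _ measurableSet_Iic
      exact ((g_measurable (α - 1)).aestronglyMeasurable).smul
        ((hV.comp (continuous_const.sub continuous_id)).aestronglyMeasurable)
    · apply Filter.Eventually.of_forall
      intro τ
      apply Filter.Eventually.of_forall
      intro u hu
      rw [uIoc_of_le hTpos.le] at hu
      have hg0 : 0 ≤ g (α - 1) u := g_nonneg hβ hu.1.le
      by_cases hcase : u ≤ τ
      · rw [hF]; simp only []
        rw [Set.indicator_of_mem (Set.mem_Iic.2 hcase), norm_smul, Real.norm_eq_abs,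
          abs_of_nonneg hg0]
        exact mul_le_mul_of_nonneg_left (hM _) hg0
      · rw [hF]; simp only []
        rw [Set.indicator_of_notMem (by simpa [Set.mem_Iic] using hcase)]
        simp only [norm_zero]
        positivity
    · exact (gker_int_id hβ 0 T).mul_const M
    · have hne : ∀ᵐ (u : ℝ), u ≠ τ0 := by
        rw [ae_iff]
        have : {u : ℝ | ¬u ≠ τ0} = {τ0} := by ext u; simp
        rw [this]
        exact Real.volume_singleton
      filter_upwards [hne] with u hu _
      apply ContinuousAt.continuousWithinAt
      rcases lt_or_gt_of_ne hu with hlt | hgt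
      · have hc : ContinuousAt (fun τ => g (α - 1) u • V (τ - u)) τ0 :=
          ((hV.comp (continuous_id.sub continuous_const)).const_smul _).continuousAt
        apply hc.congr
        filter_upwards [Ioi_mem_nhds hlt] with τ hτ
        rw [hF]; simp only []
        rw [Set.indicator_of_mem (Set.mem_Iic.2 (le_of_lt hτ))]
      · have hc : ContinuousAt (fun _ : ℝ => (0:X)) τ0 := continuousAt_const
        apply hc.congr
        filter_upwards [Iio_mem_nhds hgt] with τ hτ
        rw [hF]; simp only []
        rw [Set.indicator_of_notMem (by simp [Set.mem_Iic]; exact hτ)]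
  apply cw.congr_of_eventuallyEq
  · filter_upwards [self_mem_nhdsWithin,
      mem_nhdsWithin_of_mem_nhds (Iio_mem_nhds hτ0T)] with τ h1 h2
    exact key τ ⟨h1, le_of_lt h2⟩
  · exact key τ0 ⟨hτ0, hτ0T.le⟩

lemma Qnorm {X : Type*} [NormedAddCommGroup X] [NormedSpace ℂ X]
    {α : ℝ} (hα1 : 1 < α) (hα2 : α < 2)
    {V : ℝ → X} {M : ℝ} (hM : ∀ σ, ‖V σ‖ ≤ M) {τ : ℝ} (hτ : 0 ≤ τ) :
    ‖∫ u in (0:ℝ)..τ, g (α - 1) (τ - u) • V u‖ ≤ g α τ * M := by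
  have hβ : (0:ℝ) < α - 1 := by linarith
  have hM0 : 0 ≤ M := le_trans (norm_nonneg _) (hM 0)
  have h1 : ‖∫ u in (0:ℝ)..τ, g (α - 1) (τ - u) • V u‖
      ≤ |∫ u in (0:ℝ)..τ, g (α - 1) (τ - u) * M| := by
    apply intervalIntegral.norm_integral_le_abs_of_norm_le _ ((gker_int_left hβ τ 0 τ).mul_const M)
    filter_upwards [ae_restrict_mem measurableSet_uIoc] with u hu
    rw [uIoc_of_le hτ] at hu
    have hg0 : 0 ≤ g (α - 1) (τ - u) := g_nonneg hβ (by linarith [hu.2])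
    rw [norm_smul, Real.norm_eq_abs, abs_of_nonneg hg0]
    exact mul_le_mul_of_nonneg_left (hM _) hg0
  rw [intervalIntegral.integral_mul_const, gint0 hα1 hα2 hτ] at h1
  rwa [abs_of_nonneg (mul_nonneg (g_nonneg (by linarith) hτ) hM0)] at h1

lemma fubini_step {X : Type*} [NormedAddCommGroup X] [NormedSpace ℂ X] [CompleteSpace X]
    {α : ℝ} (hα1 : 1 < α) (hα2 : α < 2)
    {W : ℝ → X} (hW : Continuous W) {MW : ℝ} (hMW : ∀ u, ‖W u‖ ≤ MW)
    {τ : ℝ} (hτ : 0 ≤ τ) :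
    (∫ σ in (0:ℝ)..τ, ∫ u in (0:ℝ)..σ, g (α - 1) (σ - u) • W u)
      = ∫ u in (0:ℝ)..τ, g α (τ - u) • W u := by
  have hβ : (0:ℝ) < α - 1 := by linarith
  have hMW0 : 0 ≤ MW := le_trans (norm_nonneg _) (hMW 0)
  rcases eq_or_lt_of_le hτ with rfl | hτpos
  · simp
  set μ : Measure ℝ := volume.restrict (Ioc (0:ℝ) τ) with hμ
  set k : ℝ × ℝ → X :=
    fun p => ({q : ℝ × ℝ | q.2 ≤ q.1}).indicator (fun q => g (α - 1) (q.1 - q.2) • W q.2) p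
    with hk
  have hsetm : MeasurableSet {q : ℝ × ℝ | q.2 ≤ q.1} :=
    measurableSet_le measurable_snd measurable_fst
  have hk_meas : AEStronglyMeasurable k (μ.prod μ) := by
    apply AEStronglyMeasurable.indicator _ hsetm
    exact (((g_measurable (α - 1)).comp (measurable_fst.sub measurable_snd)).aestronglyMeasurable).smul
      ((hW.comp continuous_snd).aestronglyMeasurable)
  have sec1 : ∀ σ : ℝ, (fun u => k (σ, u)) = (Iic σ).indicator (fun u => g (α - 1) (σ - u) • W u) := by
    intro σ; funext u
    by_cases h : u ≤ σ
    · simp [hk, Set.indicator_apply, Set.mem_Iic, Set.mem_setOf_eq, h]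
    · simp [hk, Set.indicator_apply, Set.mem_Iic, Set.mem_setOf_eq, h]
  have sec2 : ∀ u : ℝ, (fun σ => k (σ, u)) = (Ici u).indicator (fun σ => g (α - 1) (σ - u) • W u) := by
    intro u; funext σ
    by_cases h : u ≤ σ
    · simp [hk, Set.indicator_apply, Set.mem_Ici, Set.mem_setOf_eq, h]
    · simp [hk, Set.indicator_apply, Set.mem_Ici, Set.mem_setOf_eq, h]
  have hInt_u : ∀ σ : ℝ, Integrable (fun u => k (σ, u)) μ := by
    intro σ
    rw [sec1 σ]
    apply Integrable.indicator _ measurableSet_Iic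
    exact (II.smul_cont (gker_int_left hβ σ 0 τ) hW.continuousOn).1
  have hIbnd : ∀ σ ∈ Ioc (0:ℝ) τ, (∫ u, ‖k (σ, u)‖ ∂μ) ≤ τ ^ (α - 1) / Real.Gamma α * MW := by
    intro σ hσ
    have hIl : Integrable (fun u => ‖k (σ, u)‖) μ := (hInt_u σ).norm
    have hIr : Integrable ((Iic σ).indicator (fun u => g (α - 1) (σ - u) * MW)) μ :=
      Integrable.indicator ((gker_int_left hβ σ 0 τ).mul_const MW).1 measurableSet_Iic
    have hpt : ∀ u, ‖k (σ, u)‖ ≤ (Iic σ).indicator (fun u => g (α - 1) (σ - u) * MW) u := by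
      intro u
      have hcf := congrFun (sec1 σ) u
      by_cases h : u ≤ σ
      · rw [hcf, Set.indicator_of_mem (Set.mem_Iic.2 h), Set.indicator_of_mem (Set.mem_Iic.2 h),
          norm_smul, Real.norm_eq_abs, abs_of_nonneg (g_nonneg hβ (by linarith))]
        exact mul_le_mul_of_nonneg_left (hMW u) (g_nonneg hβ (by linarith))
      · rw [hcf, Set.indicator_of_notMem (by simpa [Set.mem_Iic] using h),
          Set.indicator_of_notMem (by simpa [Set.mem_Iic] using h)]
        simp
    have step1 := integral_mono hIl hIr hpt
    have hset : Iic σ ∩ Ioc 0 τ = Ioc 0 σ := by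
      ext u
      simp only [Set.mem_inter_iff, Set.mem_Iic, Set.mem_Ioc]
      constructor
      · rintro ⟨h1, h2, _⟩; exact ⟨h2, h1⟩
      · rintro ⟨h1, h2⟩; exact ⟨h2, h1, le_trans h2 hσ.2⟩
    have step2 : (∫ u, (Iic σ).indicator (fun u => g (α - 1) (σ - u) * MW) u ∂μ)
        = ∫ u in (0:ℝ)..σ, g (α - 1) (σ - u) * MW := by
      rw [MeasureTheory.integral_indicator measurableSet_Iic, hμ,
        Measure.restrict_restrict measurableSet_Iic, hset,
        intervalIntegral.integral_of_le hσ.1.le]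
    have step3 : (∫ u in (0:ℝ)..σ, g (α - 1) (σ - u) * MW)
        = g α σ * MW := by
      rw [intervalIntegral.integral_mul_const, gint0 hα1 hα2 hσ.1.le]
    have step4 : g α σ * MW ≤ τ ^ (α - 1) / Real.Gamma α * MW := by
      apply mul_le_mul_of_nonneg_right _ hMW0
      unfold g
      exact (div_le_div_iff_of_pos_right (Real.Gamma_pos_of_pos (by linarith))).2
        (Real.rpow_le_rpow hσ.1.le hσ.2 (by linarith))
    calc (∫ u, ‖k (σ, u)‖ ∂μ) ≤ _ := step1
      _ = _ := step2
      _ = _ := step3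
      _ ≤ _ := step4
  have hprod : Integrable (Function.uncurry (fun σ u => k (σ, u))) (μ.prod μ) := by
    rw [show Function.uncurry (fun σ u => k (σ, u)) = k from rfl]
    rw [integrable_prod_iff hk_meas]
    constructor
    · exact Filter.Eventually.of_forall hInt_u
    · apply Integrable.mono' (g := fun _ => τ ^ (α - 1) / Real.Gamma α * MW)
        (integrable_const _) (hk_meas.norm.integral_prod_right')
      filter_upwards [ae_restrict_mem measurableSet_Ioc] with σ hσ
      rw [Real.norm_eq_abs, abs_of_nonneg (integral_nonneg (fun u => norm_nonneg _))]
      exact hIbnd σ hσ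
  have swap := MeasureTheory.integral_integral_swap hprod
  have lhs1 : (∫ σ in (0:ℝ)..τ, ∫ u in (0:ℝ)..σ, g (α - 1) (σ - u) • W u)
      = ∫ σ, (∫ u, k (σ, u) ∂μ) ∂μ := by
    rw [intervalIntegral.integral_of_le hτ]
    apply setIntegral_congr_fun measurableSet_Ioc
    intro σ hσ
    show (∫ u in (0:ℝ)..σ, g (α - 1) (σ - u) • W u) = ∫ u, k (σ, u) ∂μ
    have hset2 : Iic σ ∩ Ioc 0 τ = Ioc 0 σ := by
      ext u
      simp only [Set.mem_inter_iff, Set.mem_Iic, Set.mem_Ioc]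
      constructor
      · rintro ⟨h1, h2, _⟩; exact ⟨h2, h1⟩
      · rintro ⟨h1, h2⟩; exact ⟨h2, h1, le_trans h2 hσ.2⟩
    have inner : (∫ u, k (σ, u) ∂μ) = ∫ u in Ioc (0:ℝ) σ, g (α - 1) (σ - u) • W u := by
      rw [sec1 σ, MeasureTheory.integral_indicator measurableSet_Iic, hμ,
        Measure.restrict_restrict measurableSet_Iic, hset2]
    rw [inner, ← intervalIntegral.integral_of_le hσ.1.le]
  have rhs1 : (∫ u, (∫ σ, k (σ, u) ∂μ) ∂μ) = ∫ u in (0:ℝ)..τ, g α (τ - u) • W u := by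
    rw [intervalIntegral.integral_of_le hτ]
    apply setIntegral_congr_fun measurableSet_Ioc
    intro u hu
    show (∫ σ, k (σ, u) ∂μ) = g α (τ - u) • W u
    have hset : Ici u ∩ Ioc 0 τ = Icc u τ := by
      ext σ
      simp only [Set.mem_inter_iff, Set.mem_Ici, Set.mem_Ioc, Set.mem_Icc]
      constructor
      · rintro ⟨h1, _, h3⟩; exact ⟨h1, h3⟩
      · rintro ⟨h1, h2⟩; exact ⟨h1, lt_of_lt_of_le hu.1 h1, h2⟩
    have inner : (∫ σ, k (σ, u) ∂μ) = ∫ σ in u..τ, g (α - 1) (σ - u) • W u := by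
      rw [sec2 u, MeasureTheory.integral_indicator measurableSet_Ici, hμ,
        Measure.restrict_restrict measurableSet_Ici, hset,
        MeasureTheory.integral_Icc_eq_integral_Ioc, ← intervalIntegral.integral_of_le hu.2]
    rw [inner, intervalIntegral.integral_smul_const, gint hα1 hα2 hu.2]
  rw [lhs1, ← rhs1]
  exact swap

end Stmt2Aux

open Stmt2Aux intervalIntegral

theorem stmt_2
    {X : Type*} [NormedAddCommGroup X] [NormedSpace ℂ X] [CompleteSpace X]
    (α : ℝ) (hα1 : 1 < α) (hα2 : α < 2)
    (A : X →ₗ.[ℂ] X) (hA_closed : IsClosed (A.graph : Set (X × X)))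
    (hA_dense : Dense (A.domain : Set X))
    (S : ℝ → X →L[ℂ] X)
    (hS_cont : ∀ x : X, ContinuousOn (fun t => S t x) (Ici (0:ℝ)))
    (hS_zero : S 0 = 1)
    (hS_dom : ∀ t : ℝ, 0 ≤ t → ∀ x ∈ A.domain, S t x ∈ A.domain)
    (hS_comm : ∀ t : ℝ, 0 ≤ t → ∀ x y : X, (x, y) ∈ A.graph → (S t x, S t y) ∈ A.graph)
    (hS_eq : ∀ t : ℝ, 0 ≤ t → ∀ x y : X, (x, y) ∈ A.graph →
      S t x = x + ∫ s in (0:ℝ)..t, g α (t - s) • S s y)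
    :
    ∀ (x : X) (a b t : ℝ), 0 ≤ a → a ≤ b → b ≤ t →
      ((∫ s in a..b, s • Pa α S (t - s) x),
        a • S (t - a) x - b • S (t - b) x + ∫ s in a..b, S (t - s) x) ∈ A.graph := by
  intro x a b t ha hab hbt
  have hβ : (0:ℝ) < α - 1 := by linarith
  rcases eq_or_lt_of_le hab with rfl | hab'
  · -- degenerate case a = b
    simp only [intervalIntegral.integral_same]
    have : a • S (t - a) x - a • S (t - a) x + (0:X) = 0 := by abel
    rw [this]
    exact A.graph.zero_mem
  have ht0 : 0 < t := lt_of_le_of_lt ha (lt_of_lt_of_le hab' hbt)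
  -- the clamped family
  set Sc : ℝ → X →L[ℂ] X := fun σ => S (min (max σ 0) t) with hSc
  have hScS : ∀ σ : ℝ, 0 ≤ σ → σ ≤ t → Sc σ = S σ := by
    intro σ h1 h2
    rw [hSc]
    simp only [max_eq_left h1, min_eq_left h2]
  have hSccont : ∀ z : X, Continuous fun σ => Sc σ z := by
    intro z
    apply (hS_cont z).comp_continuous
      ((continuous_id.max continuous_const).min continuous_const)
    intro σ
    exact le_min (le_max_right σ 0) ht0.le
  -- uniform bound
  obtain ⟨M, hM0, hM⟩ : ∃ M : ℝ, 0 ≤ M ∧ ∀ σ : ℝ, ‖Sc σ‖ ≤ M := by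
    have hBS := banach_steinhaus (g := fun i : Icc (0:ℝ) t => S (i : ℝ)) ?_
    · obtain ⟨M0, hM0'⟩ := hBS
      refine ⟨max M0 0, le_max_right _ _, fun σ => ?_⟩
      have hmem : min (max σ 0) t ∈ Icc (0:ℝ) t :=
        ⟨le_min (le_max_right σ 0) ht0.le, min_le_right _ _⟩
      calc ‖Sc σ‖ = ‖S (min (max σ 0) t)‖ := rfl
        _ ≤ M0 := hM0' ⟨_, hmem⟩
        _ ≤ max M0 0 := le_max_left _ _
    · intro z
      obtain ⟨C, hC⟩ := (isCompact_Icc).exists_bound_of_continuousOn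
        ((hS_cont z).mono (Icc_subset_Ici_self))
      exact ⟨C, fun i => hC i i.2⟩
  have hSb : ∀ z : X, ∀ σ : ℝ, ‖Sc σ z‖ ≤ M * ‖z‖ := by
    intro z σ
    exact le_trans ((Sc σ).le_opNorm z) (mul_le_mul_of_nonneg_right (hM σ) (norm_nonneg z))
  -- the convolution Q
  set Q : X → ℝ → X := fun z τ => ∫ u in (0:ℝ)..τ, g (α - 1) (τ - u) • Sc u z with hQ
  have hQcont : ∀ z : X, ContinuousOn (Q z) (Ici 0) := by
    intro z
    exact Qcont hα1 hα2 (hSccont z) (hSb z)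
  have hQint : ∀ z : X, ∀ τ : ℝ, IntervalIntegrable (fun u => g (α - 1) (τ - u) • Sc u z) volume 0 τ := by
    intro z τ
    exact II.smul_cont (gker_int_left hβ τ 0 τ) (hSccont z).continuousOn
  have hPaQ : ∀ z : X, ∀ τ : ℝ, 0 ≤ τ → τ ≤ t → Pa α S τ z = Q z τ := by
    intro z τ h0 hτt
    rw [hQ]
    apply intervalIntegral.integral_congr
    intro u hu
    rw [uIcc_of_le h0] at hu
    simp only [hScS u hu.1 (le_trans hu.2 hτt)]
  have hQnorm : ∀ z : X, ∀ τ : ℝ, 0 ≤ τ → ‖Q z τ‖ ≤ g α τ * (M * ‖z‖) := by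
    intro z τ h0
    exact Qnorm hα1 hα2 (hSb z) h0
  -- continuity of the two integrands, for every z
  have hmapsIci : MapsTo (fun s : ℝ => t - s) (Icc a b) (Ici (0:ℝ)) := by
    intro s hs
    simp only [mem_Ici, sub_nonneg]
    exact le_trans hs.2 hbt
  have hcS : ∀ z : X, ContinuousOn (fun s => S (t - s) z) (Icc a b) := by
    intro z
    exact (hS_cont z).comp ((continuous_const.sub continuous_id).continuousOn) hmapsIci
  have hcQ : ∀ z : X, ContinuousOn (fun s => Q z (t - s)) (Icc a b) := by
    intro z
    exact (hQcont z).comp ((continuous_const.sub continuous_id).continuousOn) hmapsIci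
  have hcsQ : ∀ z : X, ContinuousOn (fun s => s • Q z (t - s)) (Icc a b) := by
    intro z
    exact (continuous_id.continuousOn).smul (hcQ z)
  have hIS : ∀ z : X, IntervalIntegrable (fun s => S (t - s) z) volume a b := by
    intro z
    apply ContinuousOn.intervalIntegrable
    rw [uIcc_of_le hab]
    exact hcS z
  have hIsQ : ∀ z : X, IntervalIntegrable (fun s => s • Q z (t - s)) volume a b := by
    intro z
    apply ContinuousOn.intervalIntegrable
    rw [uIcc_of_le hab]
    exact hcsQ z
  have hIsPa : ∀ z : X, IntervalIntegrable (fun s => s • Pa α S (t - s) z) volume a b := by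
    intro z
    apply II.congr (hIsQ z)
    intro s hs
    rw [uIoc_of_le hab] at hs
    show s • Q z (t - s) = s • Pa α S (t - s) z
    rw [hPaQ z (t - s) (by linarith [hs.2]) (by linarith [ha, hs.1])]
  -- the two components as functions of z
  set Φ : X → X × X := fun z =>
    ((∫ s in a..b, s • Pa α S (t - s) z),
      a • S (t - a) z - b • S (t - b) z + ∫ s in a..b, S (t - s) z) with hΦ
  -- membership on the domain
  have hdom : ∀ z ∈ A.domain, Φ z ∈ (A.graph : Set (X × X)) := by
    intro x' hx'
    set y : X := A ⟨x', hx'⟩ with hy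
    have hxy : (x', y) ∈ A.graph := A.mem_graph ⟨x', hx'⟩
    have hScomm : ∀ s : ℝ, 0 ≤ s → s ≤ t → (Sc s x', Sc s y) ∈ A.graph := by
      intro s h1 h2
      rw [hScS s h1 h2]
      exact hS_comm s h1 x' y hxy
    have hQmem : ∀ τ : ℝ, 0 ≤ τ → τ ≤ t → (Q x' τ, Q y τ) ∈ A.graph := by
      intro τ h0 hτ
      apply pair_integral_mem A.graph hA_closed h0 (hQint x' τ) (hQint y τ)
      intro u hu
      have hmem := hScomm u hu.1.le (le_trans hu.2 hτ)
      have heq : (g (α - 1) (τ - u) • Sc u x', g (α - 1) (τ - u) • Sc u y)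
          = g (α - 1) (τ - u) • ((Sc u x' : X), (Sc u y : X)) := rfl
      rw [heq]
      exact smul_mem_real A.graph _ hmem
    have hmain : ((∫ s in a..b, s • Q x' (t - s)), (∫ s in a..b, s • Q y (t - s))) ∈ A.graph := by
      apply pair_integral_mem A.graph hA_closed hab (hIsQ x') (hIsQ y)
      intro s hs
      have hpair := hQmem (t - s) (by linarith [hs.2]) (by linarith [ha, hs.1])
      have heq : ((s • Q x' (t - s) : X), (s • Q y (t - s) : X))
          = s • ((Q x' (t - s) : X), (Q y (t - s) : X)) := rfl
      rw [heq]
      exact smul_mem_real A.graph _ hpair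
    -- the resolvent identity in integrated form
    have hstar : ∀ τ : ℝ, 0 ≤ τ → τ ≤ t → S τ x' = x' + ∫ σ in (0:ℝ)..τ, Q y σ := by
      intro τ h0 hτt
      rw [hS_eq τ h0 x' y hxy]
      congr 1
      have e1 : (∫ s in (0:ℝ)..τ, g α (τ - s) • S s y)
          = ∫ s in (0:ℝ)..τ, g α (τ - s) • Sc s y := by
        apply intervalIntegral.integral_congr
        intro s hs
        rw [uIcc_of_le h0] at hs
        simp only [hScS s hs.1 (le_trans hs.2 hτt)]
      rw [e1, ← fubini_step hα1 hα2 (hSccont y) (hSb y) h0]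
    -- FTC
    have hGder : ∀ τ0 ∈ Ioo (0:ℝ) t, HasDerivAt (fun τ => ∫ σ in (0:ℝ)..τ, Q y σ) (Q y τ0) τ0 := by
      intro τ0 hτ0
      apply intervalIntegral.integral_hasDerivAt_right
      · apply ContinuousOn.intervalIntegrable
        apply (hQcont y).mono
        rw [uIcc_of_le hτ0.1.le]
        exact Icc_subset_Ici_self
      · exact ⟨Ici 0, Ici_mem_nhds hτ0.1, (hQcont y).aestronglyMeasurable measurableSet_Ici⟩
      · exact (hQcont y).continuousAt (Ici_mem_nhds hτ0.1)
    have hSder : ∀ s ∈ Ioo a b, HasDerivAt (fun s' => S (t - s') x') (-(Q y (t - s))) s := by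
      intro s hs
      have hτ0 : t - s ∈ Ioo (0:ℝ) t := ⟨by linarith [hs.2], by linarith [ha, hs.1]⟩
      have hinner : HasDerivAt (fun s' : ℝ => t - s') (-1) s := by
        simpa using (hasDerivAt_id s).const_sub t
      have hcomp := (hGder (t - s) hτ0).scomp s hinner
      have hcomp2 : HasDerivAt (fun s' => x' + ∫ σ in (0:ℝ)..(t - s'), Q y σ)
          (-(Q y (t - s))) s := by
        have := hcomp.const_add x'
        simpa [neg_smul, one_smul] using this
      apply hcomp2.congr_of_eventuallyEq
      have hsIoo : s ∈ Ioo (0:ℝ) t := ⟨by linarith [ha, hs.1], by linarith [hs.2, hbt]⟩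
      filter_upwards [Ioo_mem_nhds hsIoo.1 hsIoo.2] with s' hs'
      rw [hstar (t - s') (by linarith [hs'.2]) (by linarith [hs'.1])]
    have hFder : ∀ s ∈ Ioo a b,
        HasDerivAt (fun s' => s' • S (t - s') x') (S (t - s) x' - s • Q y (t - s)) s := by
      intro s hs
      have := (hasDerivAt_id s).smul (hSder s hs)
      simpa [one_smul, smul_neg, sub_eq_add_neg, add_comm, Pi.smul_def'] using this
    have hcF : ContinuousOn (fun s => s • S (t - s) x') (Icc a b) :=
      (continuous_id.continuousOn).smul (hcS x')
    have hIF' : IntervalIntegrable (fun s => S (t - s) x' - s • Q y (t - s)) volume a b := by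
      apply ContinuousOn.intervalIntegrable
      rw [uIcc_of_le hab]
      exact (hcS x').sub (hcsQ y)
    have hftc := intervalIntegral.integral_eq_sub_of_hasDeriv_right_of_le hab hcF
      (fun s hs => (hFder s hs).hasDerivWithinAt) hIF'
    have hsplit := intervalIntegral.integral_sub (hIS x') (hIsQ y)
    have hkey : (∫ s in a..b, s • Q y (t - s))
        = a • S (t - a) x' - b • S (t - b) x' + ∫ s in a..b, S (t - s) x' := by
      have h1 : (∫ s in a..b, S (t - s) x') - (∫ s in a..b, s • Q y (t - s))
          = b • S (t - b) x' - a • S (t - a) x' := by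
        rw [← hsplit]
        exact hftc
      have h2 : (∫ s in a..b, s • Q y (t - s))
          = (∫ s in a..b, S (t - s) x')
            - ((∫ s in a..b, S (t - s) x') - (∫ s in a..b, s • Q y (t - s))) := by abel
      rw [h2, h1]
      abel
    -- assemble
    have ePa : (∫ s in a..b, s • Pa α S (t - s) x') = ∫ s in a..b, s • Q x' (t - s) := by
      apply intervalIntegral.integral_congr
      intro s hs
      rw [uIcc_of_le hab] at hs
      simp only [hPaQ x' (t - s) (by linarith [hs.2]) (by linarith [ha, hs.1])]
    show ((∫ s in a..b, s • Pa α S (t - s) x'),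
        a • S (t - a) x' - b • S (t - b) x' + ∫ s in a..b, S (t - s) x') ∈ A.graph
    rw [ePa, ← hkey]
    exact hmain
  -- continuity of Φ
  have hΦsub : ∀ z1 z2 : X, Φ z1 - Φ z2 = Φ (z1 - z2) := by
    intro z1 z2
    have e1 : (∫ s in a..b, s • Pa α S (t - s) z1) - (∫ s in a..b, s • Pa α S (t - s) z2)
        = ∫ s in a..b, s • Pa α S (t - s) (z1 - z2) := by
      rw [← intervalIntegral.integral_sub (hIsPa z1) (hIsPa z2)]
      apply intervalIntegral.integral_congr
      intro s hs
      rw [uIcc_of_le hab] at hs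
      have h0 : (0:ℝ) ≤ t - s := by linarith [hs.2]
      have h1 : t - s ≤ t := by linarith [ha, hs.1]
      show s • Pa α S (t - s) z1 - s • Pa α S (t - s) z2 = s • Pa α S (t - s) (z1 - z2)
      rw [hPaQ z1 (t - s) h0 h1, hPaQ z2 (t - s) h0 h1, hPaQ (z1 - z2) (t - s) h0 h1]
      have eQ : Q (z1 - z2) (t - s) = Q z1 (t - s) - Q z2 (t - s) := by
        rw [hQ]
        simp only []
        rw [← intervalIntegral.integral_sub (hQint z1 (t - s)) (hQint z2 (t - s))]
        apply intervalIntegral.integral_congr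
        intro u _
        simp only [map_sub, smul_sub]
      rw [eQ, smul_sub]
    have e2 : (∫ s in a..b, S (t - s) z1) - (∫ s in a..b, S (t - s) z2)
        = ∫ s in a..b, S (t - s) (z1 - z2) := by
      rw [← intervalIntegral.integral_sub (hIS z1) (hIS z2)]
      apply intervalIntegral.integral_congr
      intro s _
      simp only [map_sub]
    have e3 : (a • S (t - a) z1 - b • S (t - b) z1 + ∫ s in a..b, S (t - s) z1)
        - (a • S (t - a) z2 - b • S (t - b) z2 + ∫ s in a..b, S (t - s) z2)
        = a • S (t - a) (z1 - z2) - b • S (t - b) (z1 - z2)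
          + ∫ s in a..b, S (t - s) (z1 - z2) := by
      rw [map_sub (S (t - a)), map_sub (S (t - b)), ← e2, smul_sub, smul_sub]
      abel
    exact Prod.ext e1 e3
  -- norm bounds for the two components
  have hb0 : (0:ℝ) ≤ b := le_trans ha hab
  have hg0 : 0 ≤ g α t := g_nonneg (by linarith) ht0.le
  have hSnorm : ∀ (z : X) (τ : ℝ), 0 ≤ τ → τ ≤ t → ‖S τ z‖ ≤ M * ‖z‖ := by
    intro z τ h1 h2
    rw [← hScS τ h1 h2]
    exact hSb z τ
  have hΦ1b : ∀ z : X, ‖∫ s in a..b, s • Pa α S (t - s) z‖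
      ≤ (b * (g α t * M) * (b - a)) * ‖z‖ := by
    intro z
    have hbnd : ∀ s ∈ Set.uIoc a b, ‖s • Pa α S (t - s) z‖ ≤ b * (g α t * (M * ‖z‖)) := by
      intro s hs
      rw [uIoc_of_le hab] at hs
      have h0 : (0:ℝ) ≤ t - s := by linarith [hs.2]
      have h1 : t - s ≤ t := by linarith [ha, hs.1]
      rw [hPaQ z _ h0 h1, norm_smul, Real.norm_eq_abs,
        abs_of_nonneg (le_of_lt (lt_of_le_of_lt ha hs.1))]
      have hq : ‖Q z (t - s)‖ ≤ g α t * (M * ‖z‖) :=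
        le_trans (hQnorm z _ h0)
          (mul_le_mul_of_nonneg_right (g_mono hα1 h0 h1)
            (mul_nonneg hM0 (norm_nonneg _)))
      exact mul_le_mul hs.2 hq (norm_nonneg _) hb0
    calc ‖∫ s in a..b, s • Pa α S (t - s) z‖
        ≤ b * (g α t * (M * ‖z‖)) * |b - a| :=
          intervalIntegral.norm_integral_le_of_norm_le_const hbnd
      _ = (b * (g α t * M) * (b - a)) * ‖z‖ := by
          rw [abs_of_nonneg (by linarith : (0:ℝ) ≤ b - a)]; ring
  have hΦ2b : ∀ z : X, ‖a • S (t - a) z - b • S (t - b) z + ∫ s in a..b, S (t - s) z‖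
      ≤ ((a + b + (b - a)) * M) * ‖z‖ := by
    intro z
    have h1 : ‖a • S (t - a) z‖ ≤ a * (M * ‖z‖) := by
      rw [norm_smul, Real.norm_eq_abs, abs_of_nonneg ha]
      exact mul_le_mul_of_nonneg_left (hSnorm z _ (by linarith) (by linarith)) ha
    have h2 : ‖b • S (t - b) z‖ ≤ b * (M * ‖z‖) := by
      rw [norm_smul, Real.norm_eq_abs, abs_of_nonneg hb0]
      exact mul_le_mul_of_nonneg_left (hSnorm z _ (by linarith) (by linarith)) hb0
    have h3 : ‖∫ s in a..b, S (t - s) z‖ ≤ M * ‖z‖ * |b - a| := by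
      apply intervalIntegral.norm_integral_le_of_norm_le_const
      intro s hs
      rw [uIoc_of_le hab] at hs
      exact hSnorm z _ (by linarith [hs.2]) (by linarith [ha, hs.1])
    calc ‖a • S (t - a) z - b • S (t - b) z + ∫ s in a..b, S (t - s) z‖
        ≤ ‖a • S (t - a) z - b • S (t - b) z‖ + ‖∫ s in a..b, S (t - s) z‖ :=
          norm_add_le _ _
      _ ≤ (‖a • S (t - a) z‖ + ‖b • S (t - b) z‖) + ‖∫ s in a..b, S (t - s) z‖ :=
          add_le_add_left (norm_sub_le _ _) _
      _ ≤ (a * (M * ‖z‖) + b * (M * ‖z‖)) + M * ‖z‖ * |b - a| :=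
          add_le_add (add_le_add h1 h2) h3
      _ = ((a + b + (b - a)) * M) * ‖z‖ := by
          rw [abs_of_nonneg (by linarith : (0:ℝ) ≤ b - a)]; ring
  set K1 : ℝ := b * (g α t * M) * (b - a) with hK1
  set K2 : ℝ := (a + b + (b - a)) * M with hK2
  have hK10 : 0 ≤ K1 := by
    apply mul_nonneg (mul_nonneg hb0 (mul_nonneg hg0 hM0))
    linarith
  have hK20 : 0 ≤ K2 := by
    apply mul_nonneg _ hM0
    linarith
  set K : ℝ := K1 + K2 with hKdef
  have hK0 : 0 ≤ K := add_nonneg hK10 hK20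
  have hΦcont : Continuous Φ := by
    apply (LipschitzWith.of_dist_le_mul (K := Real.toNNReal K) ?_).continuous
    intro z1 z2
    rw [Prod.dist_eq, Real.coe_toNNReal K hK0]
    have hzd : dist z1 z2 = ‖z1 - z2‖ := dist_eq_norm _ _
    have hfst : (Φ z1).1 - (Φ z2).1 = (Φ (z1 - z2)).1 := by
      rw [← hΦsub z1 z2]; rfl
    have hsnd : (Φ z1).2 - (Φ z2).2 = (Φ (z1 - z2)).2 := by
      rw [← hΦsub z1 z2]; rfl
    apply max_le
    · rw [dist_eq_norm, hfst, hzd]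
      calc ‖(Φ (z1 - z2)).1‖ ≤ K1 * ‖z1 - z2‖ := hΦ1b (z1 - z2)
        _ ≤ K * ‖z1 - z2‖ := by
            apply mul_le_mul_of_nonneg_right _ (norm_nonneg _)
            rw [hKdef]; linarith
    · rw [dist_eq_norm, hsnd, hzd]
      calc ‖(Φ (z1 - z2)).2‖ ≤ K2 * ‖z1 - z2‖ := hΦ2b (z1 - z2)
        _ ≤ K * ‖z1 - z2‖ := by
            apply mul_le_mul_of_nonneg_right _ (norm_nonneg _)
            rw [hKdef]; linarith
  have hsub' : (A.domain : Set X) ⊆ Φ ⁻¹' (A.graph : Set (X × X)) := fun z hz => hdom z hz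
  have hclos : closure (A.domain : Set X) ⊆ Φ ⁻¹' (A.graph : Set (X × X)) :=
    closure_minimal hsub' (hA_closed.preimage hΦcont)
  exact hclos (hA_dense x)
end

section
/- Let A generate an α-times resolvent family {S_α(t)}_{t≥0} on X, where 1 < α < 2, and let r > 0. Suppose that for every continuous f : [0,r] → X the element (P_α*f)(r) = ∫_0^r P_α(r−s)f(s) ds belongs to D(A). Then the linear operator f ↦ A((P_α*f)(r)) from C([0,r];X) (with the supremum norm) to X is bounded: there exists C > 0 such that ‖A((P_α*f)(r))‖ ≤ C sup_{t∈[0,r]} ‖f(t)‖ for all continuous f : [0,r] → X. -/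
open MeasureTheory Set

theorem stmt_17
    {X : Type*} [NormedAddCommGroup X] [NormedSpace ℂ X] [CompleteSpace X]
    (α : ℝ) (hα1 : 1 < α) (hα2 : α < 2)
    (A : X →ₗ.[ℂ] X) (hA_closed : IsClosed (A.graph : Set (X × X)))
    (hA_dense : Dense (A.domain : Set X))
    (S : ℝ → X →L[ℂ] X)
    (hS_cont : ∀ x : X, ContinuousOn (fun t => S t x) (Ici (0:ℝ)))
    (hS_zero : S 0 = 1)
    (hS_dom : ∀ t : ℝ, 0 ≤ t → ∀ x ∈ A.domain, S t x ∈ A.domain)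
    (hS_comm : ∀ t : ℝ, 0 ≤ t → ∀ x y : X, (x, y) ∈ A.graph → (S t x, S t y) ∈ A.graph)
    (hS_eq : ∀ t : ℝ, 0 ≤ t → ∀ x y : X, (x, y) ∈ A.graph →
      S t x = x + ∫ s in (0:ℝ)..t, g α (t - s) • S s y)
    (r : ℝ) (hr : 0 < r)
    (hdom : ∀ f : ℝ → X, ContinuousOn f (Icc 0 r) →
      (∫ s in (0:ℝ)..r, Pa α S (r - s) (f s)) ∈ A.domain) :
    ∃ C > 0, ∀ (f : ℝ → X), ContinuousOn f (Icc 0 r) → ∀ z : X,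
      ((∫ s in (0:ℝ)..r, Pa α S (r - s) (f s)), z) ∈ A.graph →
      ∀ B : ℝ, (∀ t ∈ Icc (0:ℝ) r, ‖f t‖ ≤ B) → ‖z‖ ≤ C * B := by
  have hα1' : (0:ℝ) < α - 1 := by linarith
  have hα2' : (-1:ℝ) < α - 1 - 1 := by linarith
  have hΓ : 0 < Real.Gamma (α - 1) := Real.Gamma_pos_of_pos hα1'
  -- uniform bound on the operators via Banach–Steinhaus
  obtain ⟨M, hM⟩ : ∃ M : ℝ, ∀ v : Icc (0:ℝ) r, ‖S v‖ ≤ M := by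
    apply banach_steinhaus
    intro x
    obtain ⟨C, hC⟩ :=
      isCompact_Icc.exists_bound_of_continuousOn ((hS_cont x).mono Icc_subset_Ici_self)
    exact ⟨C, fun v => hC v v.2⟩
  have hM0 : 0 ≤ M := le_trans (norm_nonneg _) (hM ⟨0, le_refl 0, hr.le⟩)
  have hMx : ∀ v ∈ Icc (0:ℝ) r, ∀ x : X, ‖S v x‖ ≤ M * ‖x‖ := fun v hv x =>
    le_trans ((S v).le_opNorm x) (mul_le_mul_of_nonneg_right (hM ⟨v, hv⟩) (norm_nonneg x))
  -- kernel facts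
  have hker_nonneg : ∀ u : ℝ, 0 ≤ u → 0 ≤ g (α - 1) u := fun u hu =>
    div_nonneg (Real.rpow_nonneg hu _) hΓ.le
  have hker_int : ∀ c : ℝ, IntervalIntegrable (g (α - 1)) volume 0 c := by
    intro c
    have := (intervalIntegral.intervalIntegrable_rpow' (a := 0) (b := c) hα2').div_const
      (Real.Gamma (α - 1))
    exact this
  have hexp : α - 1 - 1 + 1 = α - 1 := by ring
  have hker_eval : ∀ t : ℝ, 0 ≤ t →
      (∫ u in (0:ℝ)..t, g (α - 1) u) = t ^ (α - 1) / ((α - 1) * Real.Gamma (α - 1)) := by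
    intro t ht
    have h1 : (∫ u in (0:ℝ)..t, u ^ (α - 1 - 1))
        = (t ^ (α - 1) - (0:ℝ) ^ (α - 1)) / (α - 1) := by
      rw [integral_rpow (Or.inl hα2'), hexp]
    rw [show (g (α-1)) = fun u => u ^ (α - 1 - 1) / Real.Gamma (α - 1) from rfl]
    rw [intervalIntegral.integral_div, h1, Real.zero_rpow (ne_of_gt hα1')]
    field_simp
    simp
  set K := r ^ (α - 1) / ((α - 1) * Real.Gamma (α - 1)) with hKdef
  have hK0 : 0 ≤ K := div_nonneg (Real.rpow_nonneg hr.le _) (mul_nonneg hα1'.le hΓ.le)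
  -- integrability of the integrand defining `Pa`
  have hPa_int : ∀ t, 0 ≤ t → t ≤ r → ∀ x : X,
      IntervalIntegrable (fun s => g (α - 1) (t - s) • S s x) volume 0 t := by
    intro t ht htr x
    have hker : IntervalIntegrable (fun s => g (α - 1) (t - s)) volume 0 t := by
      simpa using ((hker_int t).comp_sub_left t).symm
    have hkerIcc : IntegrableOn (fun s => g (α - 1) (t - s)) (Icc 0 t) volume := by
      rw [← intervalIntegrable_iff_integrableOn_Icc_of_le ht]
      exact hker
    have hcont : ContinuousOn (fun s => S s x) (Icc 0 t) :=
      (hS_cont x).mono Icc_subset_Ici_self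
    have := hkerIcc.smul_continuousOn hcont isCompact_Icc
    rw [intervalIntegrable_iff_integrableOn_Icc_of_le ht]
    exact this
  -- norm bound for Pa
  have hPa_norm : ∀ t, 0 ≤ t → t ≤ r → ∀ x : X, ‖Pa α S t x‖ ≤ K * (M * ‖x‖) := by
    intro t ht htr x
    have h1 : ‖Pa α S t x‖ ≤ ∫ s in (0:ℝ)..t, ‖g (α - 1) (t - s) • S s x‖ :=
      intervalIntegral.norm_integral_le_integral_norm ht
    have hker : IntervalIntegrable (fun s => g (α - 1) (t - s)) volume 0 t := by
      simpa using ((hker_int t).comp_sub_left t).symm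
    have h2 : (∫ s in (0:ℝ)..t, ‖g (α - 1) (t - s) • S s x‖)
        ≤ ∫ s in (0:ℝ)..t, g (α - 1) (t - s) * (M * ‖x‖) := by
      apply intervalIntegral.integral_mono_on ht ((hPa_int t ht htr x).norm)
        (hker.mul_const _)
      intro s hs
      rw [norm_smul, Real.norm_eq_abs, abs_of_nonneg (hker_nonneg _ (by linarith [hs.2]))]
      exact mul_le_mul_of_nonneg_left (hMx s ⟨hs.1, hs.2.trans htr⟩ x)
        (hker_nonneg _ (by linarith [hs.2]))
    have h3 : (∫ s in (0:ℝ)..t, g (α - 1) (t - s) * (M * ‖x‖))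
        = (∫ u in (0:ℝ)..t, g (α - 1) u) * (M * ‖x‖) := by
      rw [intervalIntegral.integral_mul_const]
      congr 1
      simpa using intervalIntegral.integral_comp_sub_left (a := 0) (b := t) (g (α - 1)) t
    have h4 : (∫ u in (0:ℝ)..t, g (α - 1) u) ≤ K := by
      rw [hker_eval t ht, hKdef]
      gcongr
    calc ‖Pa α S t x‖ ≤ ∫ s in (0:ℝ)..t, g (α - 1) (t - s) * (M * ‖x‖) := h1.trans h2
      _ = (∫ u in (0:ℝ)..t, g (α - 1) u) * (M * ‖x‖) := h3
      _ ≤ K * (M * ‖x‖) :=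
          mul_le_mul_of_nonneg_right h4 (mul_nonneg hM0 (norm_nonneg x))
  -- additivity and homogeneity of Pa
  have hPa_add : ∀ t, 0 ≤ t → t ≤ r → ∀ x y : X,
      Pa α S t (x + y) = Pa α S t x + Pa α S t y := by
    intro t ht htr x y
    rw [show Pa α S t (x + y) = ∫ s in (0:ℝ)..t, g (α - 1) (t - s) • S s (x + y) from rfl]
    simp only [map_add, smul_add]
    rw [intervalIntegral.integral_add (hPa_int t ht htr x) (hPa_int t ht htr y)]
    rfl
  have hPa_smul : ∀ (t : ℝ) (c : ℂ) (x : X), Pa α S t (c • x) = c • Pa α S t x := by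
    intro t c x
    rw [show Pa α S t (c • x) = ∫ s in (0:ℝ)..t, g (α - 1) (t - s) • S s (c • x) from rfl]
    simp only [_root_.map_smul]
    have : ∀ s : ℝ, g (α - 1) (t - s) • (c • S s x) = c • (g (α - 1) (t - s) • S s x) :=
      fun s => smul_comm _ _ _
    simp only [this]
    rw [intervalIntegral.integral_smul]
    rfl
  -- representation of Pa as an integral over a fixed interval
  have hPa_rep : ∀ t, 0 ≤ t → ∀ x : X,
      Pa α S t x = ∫ v in (0:ℝ)..1,
        ((t ^ (α - 1) * (1 - v) ^ (α - 1 - 1)) / Real.Gamma (α - 1)) • S (t * v) x := by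
    intro t ht x
    rcases eq_or_lt_of_le ht with h0 | h0
    · rw [← h0]
      simp [Pa, Real.zero_rpow (ne_of_gt hα1')]
    · have key := intervalIntegral.smul_integral_comp_mul_left (a := 0) (b := 1)
        (fun u => g (α - 1) (t - u) • S u x) t
      simp only [mul_zero, mul_one] at key
      rw [show Pa α S t x = ∫ s in (0:ℝ)..t, g (α - 1) (t - s) • S s x from rfl, ← key,
        ← intervalIntegral.integral_smul]
      apply intervalIntegral.integral_congr
      intro v hv
      rw [uIcc_of_le (zero_le_one), mem_Icc] at hv
      have h1v : 0 ≤ 1 - v := by linarith [hv.2]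
      simp only [smul_smul]
      congr 1
      have e1 : t - t * v = t * (1 - v) := by ring
      rw [show g (α - 1) (t - t * v) = (t - t * v) ^ (α - 1 - 1) / Real.Gamma (α - 1) from rfl,
        e1, Real.mul_rpow h0.le h1v]
      have e2 : t * t ^ (α - 1 - 1) = t ^ (α - 1) := by
        calc t * t ^ (α - 1 - 1) = t ^ (1:ℝ) * t ^ (α - 1 - 1) := by rw [Real.rpow_one]
          _ = t ^ (1 + (α - 1 - 1)) := (Real.rpow_add h0 _ _).symm
          _ = t ^ (α - 1) := by ring_nf
      field_simp
      linear_combination (1 - v) ^ (α - 1 - 1) * e2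
  -- the key continuity statement
  have hPsi : ∀ F : ℝ → X, ContinuousOn F (Icc 0 r) →
      ContinuousOn (fun s => Pa α S (r - s) (F s)) (Icc 0 r) := by
    intro F hF
    obtain ⟨CF, hCF⟩ := isCompact_Icc.exists_bound_of_continuousOn hF
    have hCF0 : 0 ≤ CF := le_trans (norm_nonneg _) (hCF 0 ⟨le_refl 0, hr.le⟩)
    set h : ℝ → ℝ → X := fun s v =>
      (((r - s) ^ (α - 1) * (1 - v) ^ (α - 1 - 1)) / Real.Gamma (α - 1)) • S ((r - s) * v) (F s)
      with hh
    have heq : ∀ s ∈ Icc (0:ℝ) r, Pa α S (r - s) (F s) = ∫ v in (0:ℝ)..1, h s v :=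
      fun s hs => hPa_rep (r - s) (by linarith [hs.2]) (F s)
    have hcontB : ContinuousOn (fun s => ∫ v in (0:ℝ)..1, h s v) (Icc 0 r) := by
      intro s₀ hs₀
      apply intervalIntegral.continuousWithinAt_of_dominated_interval
        (bound := fun v => (r ^ (α - 1) * (M * CF) / Real.Gamma (α - 1)) * (1 - v) ^ (α - 1 - 1))
      · -- measurability
        apply eventually_nhdsWithin_of_forall
        intro s hs
        have hres : volume.restrict (Set.uIoc (0:ℝ) 1) = volume.restrict (Ioo (0:ℝ) 1) := by
          rw [uIoc_of_le zero_le_one]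
          exact (Measure.restrict_congr_set Ioo_ae_eq_Ioc).symm
        rw [hres]
        apply ContinuousOn.aestronglyMeasurable _ measurableSet_Ioo
        apply ContinuousOn.smul (M := ℝ)
        · apply ContinuousOn.div_const
          apply ContinuousOn.mul continuousOn_const
          apply ContinuousOn.rpow_const (continuousOn_const.sub continuousOn_id)
          intro v hv
          left
          simp only [mem_Ioo] at hv
          intro hcontra
          simp only [id_eq, Pi.sub_apply] at hcontra
          linarith [hv.2]
        · apply (hS_cont (F s)).comp
            ((continuous_const.mul continuous_id).continuousOn)
          intro v hv
          simp only [mem_Ioo] at hv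
          exact mul_nonneg (by linarith [hs.2]) hv.1.le
      · -- uniform bound
        apply eventually_nhdsWithin_of_forall
        intro s hs
        apply Filter.Eventually.of_forall
        intro v hv
        rw [uIoc_of_le zero_le_one, mem_Ioc] at hv
        have h1v : 0 ≤ 1 - v := by linarith [hv.2]
        have hw : 0 ≤ (1 - v) ^ (α - 1 - 1) := Real.rpow_nonneg h1v _
        have hrs0 : 0 ≤ r - s := by linarith [hs.2]
        have hmem : (r - s) * v ∈ Icc (0:ℝ) r := by
          constructor
          · exact mul_nonneg hrs0 hv.1.le
          · calc (r - s) * v ≤ (r - s) * 1 :=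
                mul_le_mul_of_nonneg_left hv.2 hrs0
              _ ≤ r := by linarith [hs.1]
        have e1 : ‖S ((r - s) * v) (F s)‖ ≤ M * CF :=
          le_trans (hMx _ hmem _) (mul_le_mul_of_nonneg_left (hCF s hs) hM0)
        have e2 : (r - s) ^ (α - 1) ≤ r ^ (α - 1) :=
          Real.rpow_le_rpow hrs0 (by linarith [hs.1]) hα1'.le
        rw [hh]
        simp only
        rw [norm_smul, Real.norm_eq_abs, abs_of_nonneg
          (div_nonneg (mul_nonneg (Real.rpow_nonneg hrs0 _) hw) hΓ.le)]
        calc ((r - s) ^ (α - 1) * (1 - v) ^ (α - 1 - 1) / Real.Gamma (α - 1))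
              * ‖S ((r - s) * v) (F s)‖
            ≤ (r ^ (α - 1) * (1 - v) ^ (α - 1 - 1) / Real.Gamma (α - 1)) * (M * CF) := by
              apply mul_le_mul _ e1 (norm_nonneg _)
                (div_nonneg (mul_nonneg (Real.rpow_nonneg hr.le _) hw) hΓ.le)
              exact (div_le_div_iff_of_pos_right hΓ).mpr (mul_le_mul_of_nonneg_right e2 hw)
          _ = (r ^ (α - 1) * (M * CF) / Real.Gamma (α - 1)) * (1 - v) ^ (α - 1 - 1) := by
              ring
      · -- integrability of the bound
        have : IntervalIntegrable (fun v : ℝ => (1 - v) ^ (α - 1 - 1)) volume 0 1 := by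
          simpa using
            ((intervalIntegral.intervalIntegrable_rpow' (a := 0) (b := 1) hα2').comp_sub_left 1).symm
        exact this.const_mul _
      · -- continuity in the parameter
        apply Filter.Eventually.of_forall
        intro v hv
        rw [uIoc_of_le zero_le_one, mem_Ioc] at hv
        rcases eq_or_lt_of_le hv.2 with hv1 | hv1
        · -- v = 1 : h s v ≡ 0
          have hzero : (fun s => h s v) = fun _ => (0:X) := by
            funext s
            rw [hh]
            simp only
            rw [← hv1]
            norm_num
            rw [Real.zero_rpow (by intro hc; apply absurd (by linarith : α = 2) (ne_of_lt hα2))]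
            simp
          rw [hzero]
          exact continuousWithinAt_const
        · -- v < 1
          apply ContinuousWithinAt.smul (M := ℝ)
          · -- scalar part
            have c1 : Continuous fun s : ℝ => (r - s) ^ (α - 1) := by
              rw [continuous_iff_continuousAt]
              intro s
              exact (Real.continuousAt_rpow_const _ _ (Or.inr hα1'.le)).comp
                ((continuous_const.sub continuous_id).continuousAt)
            exact ((c1.mul continuous_const).div_const _).continuousWithinAt
          · -- vector part
            have hwc : Continuous fun s : ℝ => (r - s) * v :=
              (continuous_const.sub continuous_id).mul continuous_const
            have hmapsto : MapsTo (fun s : ℝ => (r - s) * v) (Icc 0 r) (Ici 0) := by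
              intro s hs
              exact mul_nonneg (by linarith [hs.2]) hv.1.le
            have h2 : ContinuousWithinAt (fun s => S ((r - s) * v) (F s₀)) (Icc 0 r) s₀ := by
              have := ((hS_cont (F s₀)).comp hwc.continuousOn hmapsto) s₀ hs₀
              exact this
            have h1 : Filter.Tendsto (fun s => S ((r - s) * v) (F s - F s₀))
                (nhdsWithin s₀ (Icc 0 r)) (nhds 0) := by
              apply squeeze_zero_norm'
              · filter_upwards [self_mem_nhdsWithin] with s hs
                have hrs0 : 0 ≤ r - s := by linarith [hs.2]
                have hmem : (r - s) * v ∈ Icc (0:ℝ) r := by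
                  constructor
                  · exact mul_nonneg hrs0 hv.1.le
                  · calc (r - s) * v ≤ (r - s) * 1 :=
                        mul_le_mul_of_nonneg_left hv.2 hrs0
                      _ ≤ r := by linarith [hs.1]
                exact hMx _ hmem _
              · have ht : Filter.Tendsto (fun s => ‖F s - F s₀‖)
                    (nhdsWithin s₀ (Icc 0 r)) (nhds 0) := by
                  have h1 : Filter.Tendsto (fun s => ‖F s - F s₀‖)
                      (nhdsWithin s₀ (Icc 0 r)) (nhds ‖F s₀ - F s₀‖) :=
                    ((hF s₀ hs₀).sub (continuousWithinAt_const (b := F s₀))).norm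
                  simpa using h1
                simpa using ht.const_mul M
            have hgoal : Filter.Tendsto (fun s => S ((r - s) * v) (F s))
                (nhdsWithin s₀ (Icc 0 r)) (nhds (S ((r - s₀) * v) (F s₀))) := by
              have hsum := h1.add h2
              rw [zero_add] at hsum
              apply hsum.congr
              intro s
              rw [← map_add]
              congr 1
              abel
            exact hgoal
    exact ContinuousOn.congr hcontB heq
  -- the Banach space of continuous functions and the associated linear maps
  have hrne : (Icc (0:ℝ) r).Nonempty := nonempty_Icc.mpr hr.le
  haveI : Nonempty (Icc (0:ℝ) r) := hrne.to_subtype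
  let toF : C(Icc (0:ℝ) r, X) → ℝ → X := fun f s => f (projIcc 0 r hr.le s)
  have htoF_cont : ∀ f : C(Icc (0:ℝ) r, X), ContinuousOn (toF f) (Icc 0 r) :=
    fun f => (f.continuous.comp continuous_projIcc).continuousOn
  let L : C(Icc (0:ℝ) r, X) → X := fun f => ∫ s in (0:ℝ)..r, Pa α S (r - s) (toF f s)
  have hLdom : ∀ f, L f ∈ A.domain := fun f => hdom (toF f) (htoF_cont f)
  have hL_int : ∀ f : C(Icc (0:ℝ) r, X),
      IntervalIntegrable (fun s => Pa α S (r - s) (toF f s)) volume 0 r := by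
    intro f
    apply ContinuousOn.intervalIntegrable
    rw [uIcc_of_le hr.le]
    exact hPsi (toF f) (htoF_cont f)
  have hL_add : ∀ f₁ f₂ : C(Icc (0:ℝ) r, X), L (f₁ + f₂) = L f₁ + L f₂ := by
    intro f₁ f₂
    have h1 : ∀ s ∈ uIcc (0:ℝ) r, Pa α S (r - s) (toF (f₁ + f₂) s)
        = Pa α S (r - s) (toF f₁ s) + Pa α S (r - s) (toF f₂ s) := by
      intro s hs
      rw [uIcc_of_le hr.le, mem_Icc] at hs
      have : toF (f₁ + f₂) s = toF f₁ s + toF f₂ s := rfl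
      rw [this, hPa_add (r - s) (by linarith [hs.2]) (by linarith [hs.1])]
    show (∫ s in (0:ℝ)..r, Pa α S (r - s) (toF (f₁ + f₂) s)) = _
    rw [intervalIntegral.integral_congr h1,
      intervalIntegral.integral_add (hL_int f₁) (hL_int f₂)]
  have hL_smul : ∀ (c : ℂ) (f : C(Icc (0:ℝ) r, X)), L (c • f) = c • L f := by
    intro c f
    have h1 : ∀ s ∈ uIcc (0:ℝ) r, Pa α S (r - s) (toF (c • f) s)
        = c • Pa α S (r - s) (toF f s) := by
      intro s _
      have : toF (c • f) s = c • toF f s := rfl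
      rw [this, hPa_smul]
    show (∫ s in (0:ℝ)..r, Pa α S (r - s) (toF (c • f) s)) = _
    rw [intervalIntegral.integral_congr h1, intervalIntegral.integral_smul]
  have hL_bound : ∀ f : C(Icc (0:ℝ) r, X), ‖L f‖ ≤ (K * (M * ‖f‖)) * r := by
    intro f
    have hb : ∀ s ∈ Set.uIoc (0:ℝ) r, ‖Pa α S (r - s) (toF f s)‖ ≤ K * (M * ‖f‖) := by
      intro s hs
      rw [uIoc_of_le hr.le, mem_Ioc] at hs
      calc ‖Pa α S (r - s) (toF f s)‖ ≤ K * (M * ‖toF f s‖) :=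
            hPa_norm (r - s) (by linarith [hs.2]) (by linarith [hs.1]) _
        _ ≤ K * (M * ‖f‖) := by
            apply mul_le_mul_of_nonneg_left _ hK0
            exact mul_le_mul_of_nonneg_left (f.norm_coe_le_norm _) hM0
    have := intervalIntegral.norm_integral_le_of_norm_le_const hb
    calc ‖L f‖ ≤ (K * (M * ‖f‖)) * |r - 0| := this
      _ = (K * (M * ‖f‖)) * r := by rw [sub_zero, abs_of_pos hr]
  let Lmap : C(Icc (0:ℝ) r, X) →ₗ[ℂ] X :=
    { toFun := L, map_add' := hL_add, map_smul' := hL_smul }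
  have hLcont : Continuous L := by
    apply AddMonoidHomClass.continuous_of_bound Lmap (K * M * r)
    intro f
    calc ‖L f‖ ≤ (K * (M * ‖f‖)) * r := hL_bound f
      _ = K * M * r * ‖f‖ := by ring
  let T : C(Icc (0:ℝ) r, X) →ₗ[ℂ] X :=
    { toFun := fun f => A ⟨L f, hLdom f⟩
      map_add' := fun f₁ f₂ => by
        have e : (⟨L (f₁ + f₂), hLdom _⟩ : A.domain)
            = ⟨L f₁, hLdom f₁⟩ + ⟨L f₂, hLdom f₂⟩ := Subtype.ext (hL_add f₁ f₂)
        show A ⟨L (f₁ + f₂), hLdom _⟩ = A ⟨L f₁, hLdom f₁⟩ + A ⟨L f₂, hLdom f₂⟩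
        rw [e, A.map_add]
      map_smul' := fun c f => by
        have e : (⟨L (c • f), hLdom _⟩ : A.domain)
            = c • ⟨L f, hLdom f⟩ := Subtype.ext (hL_smul c f)
        show A ⟨L (c • f), hLdom _⟩ = c • A ⟨L f, hLdom f⟩
        rw [e, A.map_smul] }
  have hTgraph : IsClosed (T.graph : Set (C(Icc (0:ℝ) r, X) × X)) := by
    have hset : (T.graph : Set (C(Icc (0:ℝ) r, X) × X))
        = (fun p : C(Icc (0:ℝ) r, X) × X => (L p.1, p.2)) ⁻¹' (A.graph : Set (X × X)) := by
      ext ⟨f, z⟩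
      simp only [Set.mem_preimage, SetLike.mem_coe, LinearMap.mem_graph_iff]
      constructor
      · intro hz
        rw [hz]
        exact A.mem_graph ⟨L f, hLdom f⟩
      · intro hz
        rcases A.mem_graph_iff.mp hz with ⟨y, hy1, hy2⟩
        have hy : (⟨L f, hLdom f⟩ : A.domain) = y := Subtype.ext hy1.symm
        show z = A ⟨L f, hLdom f⟩
        rw [hy, hy2]
    rw [hset]
    exact hA_closed.preimage ((hLcont.comp continuous_fst).prodMk continuous_snd)
  have hTcont : Continuous T := T.continuous_of_isClosed_graph hTgraph
  obtain ⟨C, hC0, hC⟩ := SemilinearMapClass.bound_of_continuous T hTcont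
  refine ⟨C, hC0, ?_⟩
  intro f hf z hz B hB
  have hB0 : 0 ≤ B := le_trans (norm_nonneg _) (hB 0 ⟨le_refl 0, hr.le⟩)
  let fc : C(Icc (0:ℝ) r, X) := ⟨fun t => f ↑t, hf.restrict⟩
  have hLfc : L fc = ∫ s in (0:ℝ)..r, Pa α S (r - s) (f s) := by
    apply intervalIntegral.integral_congr
    intro s hs
    rw [uIcc_of_le hr.le] at hs
    show Pa α S (r - s) (toF fc s) = Pa α S (r - s) (f s)
    have : toF fc s = f s := by
      show fc (projIcc 0 r hr.le s) = f s
      rw [projIcc_of_mem hr.le hs]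
      rfl
    rw [this]
  have hz' : (L fc, z) ∈ A.graph := by rw [hLfc]; exact hz
  have hzT : z = T fc := by
    rcases A.mem_graph_iff.mp hz' with ⟨y, hy1, hy2⟩
    have hy : (⟨L fc, hLdom fc⟩ : A.domain) = y := Subtype.ext hy1.symm
    show z = A ⟨L fc, hLdom fc⟩
    rw [hy, hy2]
  have hfc_norm : ‖fc‖ ≤ B := by
    rw [ContinuousMap.norm_le _ hB0]
    intro x
    exact hB x x.2
  calc ‖z‖ = ‖T fc‖ := by rw [hzT]
    _ ≤ C * ‖fc‖ := hC fc
    _ ≤ C * B := mul_le_mul_of_nonneg_left hfc_norm hC0.le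
end
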